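/- For every graph G and every integer k with 2 ≤ k ≤ |V(G)|, there is a spanning k-partite subgraph H of G such that λ(H) ≥ ⌈(k-1)/k · λ(G)⌉, where λ denotes edge-connectivity. -/

import Mathlib

/-- `d_G(X)`: the number of edges of `G` with exactly one endpoint in `X`
(counted via ordered pairs `(u,v)` with `u ∈ X`, `v ∉ X`). -/
noncomputable def cutCard {V : Type*} (G : SimpleGraph V) (X : Set V) : ℕ :=
  {p : V × V | G.Adj p.1 p.2 ∧ p.1 ∈ X ∧ p.2 ∉ X}.ncard

/-- The edge-connectivity `λ(G)`: the minimum of `d_G(X)` over nonempty proper `X`. -/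
noncomputable def edgeConn {V : Type*} (G : SimpleGraph V) : ℕ :=
  sInf {n : ℕ | ∃ X : Set V, X.Nonempty ∧ X ≠ Set.univ ∧ cutCard G X = n}

open Finset

/-- The spanning partite subgraph of `G` induced by a coloring `P`. -/
def partSub {V : Type*} {α : Type*} (G : SimpleGraph V) (P : V → α) : SimpleGraph V where
  Adj u v := G.Adj u v ∧ P u ≠ P v
  symm := ⟨fun _ _ h => ⟨h.1.symm, h.2.symm⟩⟩
  loopless := ⟨fun u h => G.loopless.irrefl u h.1⟩

open scoped Classical in
lemma cutCard_eq_card {V : Type*} [Fintype V] (G : SimpleGraph V) (X : Set V) :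
    cutCard G X = (univ.filter fun p : V × V => G.Adj p.1 p.2 ∧ p.1 ∈ X ∧ p.2 ∉ X).card := by
  rw [cutCard, show {p : V × V | G.Adj p.1 p.2 ∧ p.1 ∈ X ∧ p.2 ∉ X}
      = ↑(univ.filter fun p : V × V => G.Adj p.1 p.2 ∧ p.1 ∈ X ∧ p.2 ∉ X) by ext p; simp,
    Set.ncard_coe_finset]

lemma cutCard_compl {V : Type*} (G : SimpleGraph V) (X : Set V) :
    cutCard G Xᶜ = cutCard G X := by
  unfold cutCard
  rw [show {p : V × V | G.Adj p.1 p.2 ∧ p.1 ∈ Xᶜ ∧ p.2 ∉ Xᶜ}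
      = Prod.swap '' {p : V × V | G.Adj p.1 p.2 ∧ p.1 ∈ X ∧ p.2 ∉ X} from ?_]
  · exact Set.ncard_image_of_injective _ Prod.swap_injective
  · ext ⟨u, v⟩
    simp only [Set.mem_image, Set.mem_setOf_eq, Set.mem_compl_iff, Prod.exists,
      Prod.swap_prod_mk, Prod.mk.injEq, not_not]
    constructor
    · rintro ⟨h, hu, hv⟩; exact ⟨v, u, ⟨h.symm, hv, hu⟩, rfl, rfl⟩
    · rintro ⟨a, b, ⟨h, ha, hb⟩, rfl, rfl⟩; exact ⟨h.symm, hb, ha⟩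

open scoped Classical in
lemma key_ineq {V : Type*} [Fintype V] {k : ℕ} (hk : 2 ≤ k) (G : SimpleGraph V)
    (P : V → ZMod k)
    (hmax : ∀ Q : V → ZMod k,
      (univ.filter fun p : V × V => G.Adj p.1 p.2 ∧ Q p.1 ≠ Q p.2).card ≤
      (univ.filter fun p : V × V => G.Adj p.1 p.2 ∧ P p.1 ≠ P p.2).card)
    (X : Set V) :
    (k - 1) * cutCard G X ≤ k * cutCard (partSub G P) X := by
  haveI : NeZero k := ⟨by omega⟩
  set E : Finset (V × V) := univ.filter fun p : V × V => G.Adj p.1 p.2 with hE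
  set w : (V → ZMod k) → ℕ := fun Q => (E.filter fun p => Q p.1 ≠ Q p.2).card with hw
  have hmax' : ∀ Q, w Q ≤ w P := by
    intro Q; simpa [hw, hE, filter_filter] using hmax Q
  set Qt : ZMod k → V → ZMod k := fun t v => if v ∈ X then P v + t else P v with hQt
  have hcardZ : Fintype.card (ZMod k) = k := ZMod.card k
  have hsum : ∑ t : ZMod k, w (Qt t) =
      ∑ p ∈ E, (univ.filter fun t : ZMod k => Qt t p.1 ≠ Qt t p.2).card := by
    simp only [hw, card_filter]
    exact Finset.sum_comm
  have hS : ∀ p : V × V, ((p.1 ∈ X) ↔ (p.2 ∈ X)) →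
      (univ.filter fun t : ZMod k => Qt t p.1 ≠ Qt t p.2).card
        = k * (if P p.1 ≠ P p.2 then 1 else 0) := by
    intro p hp
    by_cases h1 : p.1 ∈ X
    · have h2 : p.2 ∈ X := hp.mp h1
      have hiff : ∀ t : ZMod k, (Qt t p.1 ≠ Qt t p.2) ↔ (P p.1 ≠ P p.2) := by
        intro t; simp [hQt, h1, h2]
      by_cases hne : P p.1 ≠ P p.2 <;> simp [hiff, hne, filter_true_of_mem, hcardZ]
    · have h2 : p.2 ∉ X := fun h => h1 (hp.mpr h)
      have hiff : ∀ t : ZMod k, (Qt t p.1 ≠ Qt t p.2) ↔ (P p.1 ≠ P p.2) := by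
        intro t; simp [hQt, h1, h2]
      by_cases hne : P p.1 ≠ P p.2 <;> simp [hiff, hne, filter_true_of_mem, hcardZ]
  have hC : ∀ p : V × V, ¬((p.1 ∈ X) ↔ (p.2 ∈ X)) →
      (univ.filter fun t : ZMod k => Qt t p.1 ≠ Qt t p.2).card = k - 1 := by
    intro p hp
    by_cases h1 : p.1 ∈ X
    · have h2 : p.2 ∉ X := fun h => hp ⟨fun _ => h, fun _ => h1⟩
      have hiff : ∀ t : ZMod k, (Qt t p.1 ≠ Qt t p.2) ↔ t ≠ P p.2 - P p.1 := by
        intro t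
        simp only [hQt, h1, h2, if_true, if_false]
        constructor
        · intro h he; exact h (by rw [he]; ring)
        · intro h he; exact h (by rw [← he]; ring)
      have herase : (univ.filter fun t : ZMod k => Qt t p.1 ≠ Qt t p.2)
          = univ.erase (P p.2 - P p.1) := by
        ext t; simp [hiff t]
      rw [herase, card_erase_of_mem (mem_univ _), card_univ, hcardZ]
    · have h2 : p.2 ∈ X := by
        by_contra h2; exact hp ⟨fun h => absurd h h1, fun h => absurd h h2⟩
      have hiff : ∀ t : ZMod k, (Qt t p.1 ≠ Qt t p.2) ↔ t ≠ P p.1 - P p.2 := by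
        intro t
        simp only [hQt, h1, h2, if_true, if_false]
        constructor
        · intro h he; exact h (by rw [he]; ring)
        · intro h he; exact h (by rw [he]; ring)
      have herase : (univ.filter fun t : ZMod k => Qt t p.1 ≠ Qt t p.2)
          = univ.erase (P p.1 - P p.2) := by
        ext t; simp [hiff t]
      rw [herase, card_erase_of_mem (mem_univ _), card_univ, hcardZ]
  have hsplit : ∑ p ∈ E, (univ.filter fun t : ZMod k => Qt t p.1 ≠ Qt t p.2).card
      = k * (∑ p ∈ E.filter (fun p => (p.1 ∈ X) ↔ (p.2 ∈ X)), if P p.1 ≠ P p.2 then 1 else 0)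
        + (k - 1) * (E.filter fun p => ¬((p.1 ∈ X) ↔ (p.2 ∈ X))).card := by
    rw [← sum_filter_add_sum_filter_not E (fun p => (p.1 ∈ X) ↔ (p.2 ∈ X))]
    congr 1
    · rw [mul_sum]; exact sum_congr rfl fun p hp => hS p (mem_filter.mp hp).2
    · rw [sum_congr rfl fun p hp => hC p (mem_filter.mp hp).2, sum_const, smul_eq_mul, mul_comm]
  have hwP : w P = (∑ p ∈ E.filter (fun p => (p.1 ∈ X) ↔ (p.2 ∈ X)), if P p.1 ≠ P p.2 then 1 else 0)
      + ∑ p ∈ E.filter (fun p => ¬((p.1 ∈ X) ↔ (p.2 ∈ X))), if P p.1 ≠ P p.2 then 1 else 0 := by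
    simp only [hw]
    rw [card_filter]
    exact (sum_filter_add_sum_filter_not E _ _).symm
  have hle : ∑ t : ZMod k, w (Qt t) ≤ k * w P := by
    calc ∑ t : ZMod k, w (Qt t) ≤ ∑ _t : ZMod k, w P := sum_le_sum fun t _ => hmax' _
    _ = k * w P := by rw [sum_const, card_univ, hcardZ, smul_eq_mul]
  rw [hsum, hsplit, hwP, mul_add] at hle
  have hkey : (k - 1) * (E.filter fun p => ¬((p.1 ∈ X) ↔ (p.2 ∈ X))).card
      ≤ k * ∑ p ∈ E.filter (fun p => ¬((p.1 ∈ X) ↔ (p.2 ∈ X))), if P p.1 ≠ P p.2 then 1 else 0 := by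
    omega
  have eG1 : (univ.filter fun p : V × V => G.Adj p.1 p.2 ∧ p.1 ∈ X ∧ p.2 ∉ X).card
      = cutCard G X := (cutCard_eq_card G X).symm
  have eG2 : (univ.filter fun p : V × V => G.Adj p.1 p.2 ∧ p.1 ∈ Xᶜ ∧ p.2 ∉ Xᶜ).card
      = cutCard G X := by
    rw [← cutCard_compl G X]
    have := (cutCard_eq_card G Xᶜ).symm
    convert this using 2
    simp [Finset.filter_congr_decidable]
  have eH1 : (univ.filter fun p : V × V => (partSub G P).Adj p.1 p.2 ∧ p.1 ∈ X ∧ p.2 ∉ X).card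
      = cutCard (partSub G P) X := (cutCard_eq_card _ X).symm
  have eH2 : (univ.filter fun p : V × V => (partSub G P).Adj p.1 p.2 ∧ p.1 ∈ Xᶜ ∧ p.2 ∉ Xᶜ).card
      = cutCard (partSub G P) X := by
    rw [← cutCard_compl (partSub G P) X]
    have := (cutCard_eq_card (partSub G P) Xᶜ).symm
    convert this using 2
    simp [Finset.filter_congr_decidable]
  have hCcard : (E.filter fun p => ¬((p.1 ∈ X) ↔ (p.2 ∈ X))).card = 2 * cutCard G X := by
    set C := E.filter fun p => ¬((p.1 ∈ X) ↔ (p.2 ∈ X)) with hCdef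
    have h1 : C.filter (fun p => p.1 ∈ X)
        = univ.filter fun p : V × V => G.Adj p.1 p.2 ∧ p.1 ∈ X ∧ p.2 ∉ X := by
      ext p; simp only [hCdef, hE, mem_filter, mem_univ, true_and]; tauto
    have h2 : C.filter (fun p => ¬ p.1 ∈ X)
        = univ.filter fun p : V × V => G.Adj p.1 p.2 ∧ p.1 ∈ Xᶜ ∧ p.2 ∉ Xᶜ := by
      ext p; simp only [hCdef, hE, mem_filter, mem_univ, true_and, Set.mem_compl_iff, not_not]; tauto
    have hpm := card_filter_add_card_filter_not (s := C) (p := fun p => p.1 ∈ X)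
    rw [h1, h2, eG1, eG2] at hpm
    omega
  have hHcard : ∑ p ∈ E.filter (fun p => ¬((p.1 ∈ X) ↔ (p.2 ∈ X))), (if P p.1 ≠ P p.2 then 1 else 0)
      = 2 * cutCard (partSub G P) X := by
    rw [← card_filter]
    set C := (E.filter fun p => ¬((p.1 ∈ X) ↔ (p.2 ∈ X))).filter fun p => P p.1 ≠ P p.2 with hCdef
    have h1 : C.filter (fun p => p.1 ∈ X)
        = univ.filter fun p : V × V => (partSub G P).Adj p.1 p.2 ∧ p.1 ∈ X ∧ p.2 ∉ X := by
      ext p; simp only [hCdef, hE, mem_filter, mem_univ, true_and]; simp only [partSub]; tauto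
    have h2 : C.filter (fun p => ¬ p.1 ∈ X)
        = univ.filter fun p : V × V => (partSub G P).Adj p.1 p.2 ∧ p.1 ∈ Xᶜ ∧ p.2 ∉ Xᶜ := by
      ext p; simp only [hCdef, hE, mem_filter, mem_univ, true_and, Set.mem_compl_iff, not_not]; simp only
        [partSub]; tauto
    have hpm := card_filter_add_card_filter_not (s := C) (p := fun p => p.1 ∈ X)
    rw [h1, h2, eH1, eH2] at hpm
    omega
  rw [hCcard, hHcard] at hkey
  have h2 : 2 * ((k - 1) * cutCard G X) ≤ 2 * (k * cutCard (partSub G P) X) := by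
    calc 2 * ((k - 1) * cutCard G X) = (k-1) * (2 * cutCard G X) := by ring
    _ ≤ k * (2 * cutCard (partSub G P) X) := hkey
    _ = 2 * (k * cutCard (partSub G P) X) := by ring
  omega

/-- For every graph `G` and every `2 ≤ k ≤ |V(G)|` there is a spanning `k`-partite
subgraph `H` of `G` with `λ(H) ≥ ⌈(k-1)/k · λ(G)⌉`. -/
theorem stmt3 {V : Type*} [Fintype V] (G : SimpleGraph V) (k : ℕ)
    (hk2 : 2 ≤ k) (hkn : k ≤ Fintype.card V) :
    ∃ H : SimpleGraph V, H ≤ G ∧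
      (∃ P : V → Fin k, ∀ u v, H.Adj u v → P u ≠ P v) ∧
      ⌈((k - 1 : ℚ) / k) * (edgeConn G : ℚ)⌉ ≤ (edgeConn H : ℤ) := by
  classical
  haveI : NeZero k := ⟨by omega⟩
  obtain ⟨P, hmax⟩ := Finite.exists_max (fun Q : V → ZMod k =>
    (univ.filter fun p : V × V => G.Adj p.1 p.2 ∧ Q p.1 ≠ Q p.2).card)
  refine ⟨partSub G P, fun u v h => h.1, ?_, ?_⟩
  · have e : ZMod k ≃ Fin k := Fintype.equivFinOfCardEq (ZMod.card k)
    exact ⟨fun v => e (P v), fun u v h he => h.2 (e.injective he)⟩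
  · have hVne : ∃ X : Set V, X.Nonempty ∧ X ≠ Set.univ := by
      obtain ⟨x, y, hxy⟩ := Fintype.exists_pair_of_one_lt_card (by omega : 1 < Fintype.card V)
      refine ⟨{x}, Set.singleton_nonempty x, fun h => hxy ?_⟩
      have : y ∈ ({x} : Set V) := h.symm ▸ Set.mem_univ y
      simpa [eq_comm] using this
    have hne : {n : ℕ | ∃ X : Set V, X.Nonempty ∧ X ≠ Set.univ ∧
        cutCard (partSub G P) X = n}.Nonempty := by
      obtain ⟨X, h1, h2⟩ := hVne; exact ⟨_, X, h1, h2, rfl⟩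
    obtain ⟨X0, hX0ne, hX0univ, hX0⟩ :
        edgeConn (partSub G P) ∈ {n : ℕ | ∃ X : Set V, X.Nonempty ∧ X ≠ Set.univ ∧
          cutCard (partSub G P) X = n} := Nat.sInf_mem hne
    have hG : edgeConn G ≤ cutCard G X0 := Nat.sInf_le ⟨X0, hX0ne, hX0univ, rfl⟩
    have hk' := key_ineq hk2 G P hmax X0
    have hNat : (k - 1) * edgeConn G ≤ k * edgeConn (partSub G P) := by
      calc (k-1) * edgeConn G ≤ (k-1) * cutCard G X0 := Nat.mul_le_mul_left _ hG
      _ ≤ k * cutCard (partSub G P) X0 := hk'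
      _ = k * edgeConn (partSub G P) := by rw [hX0]
    rw [Int.ceil_le]
    push_cast
    have hkQ : (0:ℚ) < (k:ℚ) := by exact_mod_cast (by omega : 0 < k)
    rw [div_mul_eq_mul_div, div_le_iff₀ hkQ]
    have hcast : (((k-1) * edgeConn G : ℕ) : ℚ) ≤ ((k * edgeConn (partSub G P) : ℕ) : ℚ) := by
      exact_mod_cast hNat
    push_cast [Nat.cast_sub (by omega : 1 ≤ k)] at hcast
    linarith
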